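/- Let λ be a covariant highest weight for gl(m|n) and μ a partition with 0 ≤ λ_i − μ_i ≤ n for all i. The Drinfeld polynomials of the Y(gl_n)-module L(λ)⁺_μ are P_k(u) = ∏_α (u − c(α)) for k = 1,…,n−1, where α runs over the leftmost boxes of the rows of length k in the skew diagram Γ_λ/μ and c(α) = j − i is the content of the box α in row i, column j. Equivalently, defining σ_i = μ_i − i + 1, P_k(u) = ∏_{i : λ_i − μ_i = k} (u − σ_i) · ∏_{j=1}^{λ_{m+k} − λ_{m+k+1}} (u + λ_{m+k+1} + m + j − 1), and these two product formulas agree as polynomials in u. -/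

import Mathlib

/-- Row lengths of the Young diagram `Γ_λ` attached to the covariant highest
weight `λ = (lam | nu)`. -/
def GammaRows (m n : ℕ) (lam : Fin m → ℕ) (nu : Fin n → ℕ) : ℕ → ℕ :=
  fun i => if h : i < m then lam ⟨i, h⟩
    else (Finset.univ.filter fun p : Fin n => i - m + 1 ≤ nu p).card

/-- the Drinfeld polynomial `P_k(u) = ∏_α (u - c(α))`, where `α`
runs over the leftmost boxes of the rows of length `k` of the skew diagram
`Γ_λ/μ` (row `i`, 0-based, has length `Γ_i - μ_i` and leftmost box of content
`μ_i - i`), equals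
`∏_{i : λ_i - μ_i = k} (u - σ_i) · ∏_{j=1}^{λ_{m+k} - λ_{m+k+1}} (u + λ_{m+k+1} + m + j - 1)`
with `σ_i = μ_i - i + 1` (1-based).  Stated as an identity in `ℤ[u]`. -/
theorem stmt_7 (m n : ℕ) (hm : 0 < m) (hn : 2 ≤ n)
    (lam : Fin m → ℕ) (nu : Fin n → ℕ)
    (hlam : ∀ i j : Fin m, i ≤ j → lam j ≤ lam i)
    (hnu : ∀ p q : Fin n, p ≤ q → nu q ≤ nu p)
    (hell : (Finset.univ.filter fun p : Fin n => nu p ≠ 0).card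
      ≤ lam ⟨m - 1, Nat.sub_lt hm one_pos⟩)
    (mu : Fin m → ℕ) (hmu : ∀ i j : Fin m, i ≤ j → mu j ≤ mu i)
    (hmulam : ∀ i : Fin m, mu i ≤ lam i ∧ lam i ≤ mu i + n)
    (mue : ℕ → ℕ) (hmue : ∀ i, mue i = if h : i < m then mu ⟨i, h⟩ else 0)
    (k : ℕ) (hk1 : 1 ≤ k) (hkn : k ≤ n - 1) :
    (∏ i ∈ (Finset.range (m + nu ⟨0, by omega⟩)).filter
        (fun i => GammaRows m n lam nu i - mue i = k),
      (Polynomial.X - Polynomial.C ((mue i : ℤ) - i)))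
    = (∏ i ∈ Finset.univ.filter (fun i : Fin m => lam i - mu i = k),
        (Polynomial.X - Polynomial.C ((mu i : ℤ) - (i : ℕ))))
      * ∏ j ∈ Finset.Icc 1 (nu ⟨k - 1, by omega⟩ - nu ⟨k, by omega⟩),
          (Polynomial.X + Polynomial.C ((nu ⟨k, by omega⟩ : ℤ) + m + j - 1)) := by
  have hkn' : k < n := by omega
  have hk1n : k - 1 < n := by omega
  have h0n : (0:ℕ) < n := by omega
  set N := nu ⟨0, h0n⟩ with hN
  set a := nu ⟨k - 1, hk1n⟩ with ha
  set b := nu ⟨k, hkn'⟩ with hb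
  have hba : b ≤ a := hnu _ _ (by simp only [Fin.le_def]; omega)
  have haN : a ≤ N := hnu _ _ (by simp [Fin.le_def])
  -- key counting lemma
  have hcard : ∀ j : ℕ, 1 ≤ j →
      (((Finset.univ.filter fun p : Fin n => j ≤ nu p).card = k) ↔ (b < j ∧ j ≤ a)) := by
    intro j hj
    constructor
    · intro h
      constructor
      · by_contra hbj
        push_neg at hbj
        have hsub : Finset.Iic (⟨k, hkn'⟩ : Fin n) ⊆
            Finset.univ.filter fun p : Fin n => j ≤ nu p := by
          intro p hp
          simp only [Finset.mem_Iic, Fin.le_def] at hp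
          simp only [Finset.mem_filter, Finset.mem_univ, true_and]
          exact le_trans hbj (hnu p ⟨k, hkn'⟩ (by simp [Fin.le_def]; omega))
        have hc := Finset.card_le_card hsub
        rw [h, Fin.card_Iic] at hc
        simp only [Fin.val_mk] at hc
        omega
      · by_contra haj
        push_neg at haj
        have hsub : (Finset.univ.filter fun p : Fin n => j ≤ nu p) ⊆
            Finset.Iio (⟨k - 1, hk1n⟩ : Fin n) := by
          intro p hp
          simp only [Finset.mem_filter, Finset.mem_univ, true_and] at hp
          simp only [Finset.mem_Iio, Fin.lt_def]
          by_contra hpk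
          push_neg at hpk
          have := hnu ⟨k - 1, hk1n⟩ p (by simp [Fin.le_def]; omega)
          omega
        have hc := Finset.card_le_card hsub
        rw [h, Fin.card_Iio] at hc
        simp only [Fin.val_mk] at hc
        omega
    · rintro ⟨hbj, hja⟩
      have heq : (Finset.univ.filter fun p : Fin n => j ≤ nu p)
          = Finset.Iio (⟨k, hkn'⟩ : Fin n) := by
        ext p
        simp only [Finset.mem_filter, Finset.mem_univ, true_and, Finset.mem_Iio, Fin.lt_def]
        constructor
        · intro hp
          by_contra hpk
          push_neg at hpk
          have := hnu ⟨k, hkn'⟩ p (by simp [Fin.le_def]; omega)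
          omega
        · intro hp
          have := hnu p ⟨k - 1, hk1n⟩ (by simp [Fin.le_def]; omega)
          omega
      rw [heq, Fin.card_Iio]
  -- split the range
  have hsplit : Finset.range (m + N) = Finset.range m ∪ Finset.Ico m (m + N) := by
    rw [Finset.range_eq_Ico,
      ← Finset.Ico_union_Ico_eq_Ico (Nat.zero_le m) (Nat.le_add_right m N), Finset.range_eq_Ico]
  have hdisj : Disjoint
      ((Finset.range m).filter (fun i => GammaRows m n lam nu i - mue i = k))
      ((Finset.Ico m (m + N)).filter (fun i => GammaRows m n lam nu i - mue i = k)) := by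
    apply Finset.disjoint_left.mpr
    intro i hi hi'
    simp only [Finset.mem_filter, Finset.mem_range, Finset.mem_Ico] at hi hi'
    omega
  rw [hsplit, Finset.filter_union, Finset.prod_union hdisj]
  congr 1
  · -- the first block
    rw [Finset.prod_filter, Finset.prod_filter, ← Fin.prod_univ_eq_prod_range]
    apply Finset.prod_congr rfl
    intro i _
    have h1 : GammaRows m n lam nu i.val = lam i := by
      simp [GammaRows, i.isLt]
    have h2 : mue i.val = mu i := by
      rw [hmue]; simp [i.isLt]
    rw [h1, h2]
  · -- the second block
    symm
    apply Finset.prod_nbij' (i := fun x => m + b + x - 1) (j := fun i => i - m - b + 1)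
    · intro x hx
      simp only [Finset.mem_Icc] at hx
      have hG : GammaRows m n lam nu (m + b + x - 1) =
          (Finset.univ.filter fun p : Fin n => b + x ≤ nu p).card := by
        simp only [GammaRows]
        rw [dif_neg (by omega)]
        have : m + b + x - 1 - m + 1 = b + x := by omega
        rw [this]
      have hm0 : mue (m + b + x - 1) = 0 := by rw [hmue, dif_neg (by omega)]
      simp only [Finset.mem_filter, Finset.mem_Ico]
      refine ⟨⟨by omega, by omega⟩, ?_⟩
      rw [hG, hm0, Nat.sub_zero, hcard (b + x) (by omega)]
      omega
    · intro i hi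
      simp only [Finset.mem_filter, Finset.mem_Ico] at hi
      obtain ⟨⟨hmi, _⟩, hP⟩ := hi
      have hm0 : mue i = 0 := by rw [hmue, dif_neg (by omega)]
      have hG : GammaRows m n lam nu i =
          (Finset.univ.filter fun p : Fin n => i - m + 1 ≤ nu p).card := by
        simp only [GammaRows]; rw [dif_neg (by omega)]
      rw [hm0, Nat.sub_zero, hG, hcard (i - m + 1) (by omega)] at hP
      simp only [Finset.mem_Icc]
      omega
    · intro x hx
      simp only [Finset.mem_Icc] at hx
      omega
    · intro i hi
      simp only [Finset.mem_filter, Finset.mem_Ico] at hi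
      obtain ⟨⟨hmi, _⟩, hP⟩ := hi
      have hm0 : mue i = 0 := by rw [hmue, dif_neg (by omega)]
      have hG : GammaRows m n lam nu i =
          (Finset.univ.filter fun p : Fin n => i - m + 1 ≤ nu p).card := by
        simp only [GammaRows]; rw [dif_neg (by omega)]
      rw [hm0, Nat.sub_zero, hG, hcard (i - m + 1) (by omega)] at hP
      omega
    · intro x hx
      simp only [Finset.mem_Icc] at hx
      have hm0 : mue (m + b + x - 1) = 0 := by rw [hmue, dif_neg (by omega)]
      rw [hm0]
      have hc : ((0:ℕ) : ℤ) - ((m + b + x - 1 : ℕ) : ℤ) = -((b:ℤ) + m + x - 1) := by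
        omega
      rw [hc, map_neg, sub_neg_eq_add]
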